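/- The ring O_{x₀}(K^T) of germs at x₀ of finitely presented analytic functions on K^T is a local ring whose unique maximal ideal is m_{x₀} = (x_t − x₀t : t ∈ T), the ideal generated by the germs of the coordinate functions x_t − x₀t; moreover a germ φ is non-invertible if and only if φ ∈ m_{x₀}. -/

import Mathlib

open Filter Topology
open scoped NNReal ENNReal

variable {T : Type} {K : Type} [RCLike K]

/-- Projection onto coordinates in a finite set `S`. -/
def proj (K : Type) [RCLike K] (S : Finset T) : (T → K) → ({t // t ∈ S} → K) :=
  fun x i => x i.1

theorem proj_tendsto (S : Finset T) (x₀ : T → K) :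
    Tendsto (proj K S) (𝓝 x₀) (𝓝 (proj K S x₀)) :=
  (continuous_pi fun i => continuous_apply (i.1 : T)).tendsto x₀

/-- restriction map between finite coordinate spaces -/
def restr {S S' : Finset T} (h : S ⊆ S') : ({t // t ∈ S'} → K) →L[K] ({t // t ∈ S} → K) :=
  ContinuousLinearMap.pi fun i => ContinuousLinearMap.proj ⟨i.1, h i.2⟩

/-- A germ at `x₀` is a finitely presented analytic germ if it has a representative of the
form `g ∘ proj S` for a finite `S ⊆ T` and `g` analytic at `proj S x₀`. -/
def IsFP (x₀ : T → K) (φ : Germ (𝓝 x₀) K) : Prop :=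
  ∃ (S : Finset T) (g : ({t // t ∈ S} → K) → K),
    AnalyticAt K g (proj K S x₀) ∧ φ = Germ.ofFun (fun x => g (proj K S x))

/-- The ring `O_{x₀}(K^T)` of germs of finitely presented analytic functions. -/
def Ox (x₀ : T → K) : Subring (Germ (𝓝 x₀) K) where
  carrier := {φ | IsFP x₀ φ}
  one_mem' := ⟨∅, fun _ => 1, analyticAt_const, rfl⟩
  zero_mem' := ⟨∅, fun _ => 0, analyticAt_const, rfl⟩
  mul_mem' := by
    classical
    rintro a b ⟨S₁, g₁, hg₁, rfl⟩ ⟨S₂, g₂, hg₂, rfl⟩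
    have h1 : S₁ ⊆ S₁ ∪ S₂ := Finset.subset_union_left
    have h2 : S₂ ⊆ S₁ ∪ S₂ := Finset.subset_union_right
    have hg₁' : AnalyticAt K g₁ ((restr (K := K) h1) (proj K (S₁ ∪ S₂) x₀)) := hg₁
    have hg₂' : AnalyticAt K g₂ ((restr (K := K) h2) (proj K (S₁ ∪ S₂) x₀)) := hg₂
    have e1 : AnalyticAt K (g₁ ∘ restr (K := K) h1) (proj K (S₁ ∪ S₂) x₀) :=
      hg₁'.comp ((restr (K := K) h1).analyticAt (proj K (S₁ ∪ S₂) x₀))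
    have e2 : AnalyticAt K (g₂ ∘ restr (K := K) h2) (proj K (S₁ ∪ S₂) x₀) :=
      hg₂'.comp ((restr (K := K) h2).analyticAt (proj K (S₁ ∪ S₂) x₀))
    refine ⟨S₁ ∪ S₂, (g₁ ∘ restr h1) * (g₂ ∘ restr h2), e1.mul e2, ?_⟩
    rw [← Germ.coe_mul]; rfl
  add_mem' := by
    classical
    rintro a b ⟨S₁, g₁, hg₁, rfl⟩ ⟨S₂, g₂, hg₂, rfl⟩
    have h1 : S₁ ⊆ S₁ ∪ S₂ := Finset.subset_union_left
    have h2 : S₂ ⊆ S₁ ∪ S₂ := Finset.subset_union_right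
    have hg₁' : AnalyticAt K g₁ ((restr (K := K) h1) (proj K (S₁ ∪ S₂) x₀)) := hg₁
    have hg₂' : AnalyticAt K g₂ ((restr (K := K) h2) (proj K (S₁ ∪ S₂) x₀)) := hg₂
    have e1 : AnalyticAt K (g₁ ∘ restr (K := K) h1) (proj K (S₁ ∪ S₂) x₀) :=
      hg₁'.comp ((restr (K := K) h1).analyticAt (proj K (S₁ ∪ S₂) x₀))
    have e2 : AnalyticAt K (g₂ ∘ restr (K := K) h2) (proj K (S₁ ∪ S₂) x₀) :=
      hg₂'.comp ((restr (K := K) h2).analyticAt (proj K (S₁ ∪ S₂) x₀))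
    refine ⟨S₁ ∪ S₂, (g₁ ∘ restr h1) + (g₂ ∘ restr h2), e1.add e2, ?_⟩
    rw [← Germ.coe_add]; rfl
  neg_mem' := by
    rintro a ⟨S, g, hg, rfl⟩
    exact ⟨S, -g, hg.neg, by rw [← Germ.coe_neg]; rfl⟩

/-- The ideal `m_{x₀}` generated by the germs of the coordinate functions `x_t - x₀ t`. -/
def mIdeal (x₀ : T → K) : Ideal (Ox x₀) :=
  Ideal.span {φ : Ox x₀ | ∃ t : T, (φ : Germ (𝓝 x₀) K) = Germ.ofFun (fun x => x t - x₀ t)}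

section KeyFactor
variable {ι : Type} [Fintype ι] {K : Type} [RCLike K]

set_option maxHeartbeats 1000000 in
lemma key_factor {g : (ι → K) → K} {c : ι → K} (hg : AnalyticAt K g c) (h0 : g c = 0) :
    ∃ h : ι → ((ι → K) → K), (∀ t, AnalyticAt K (h t) c) ∧
      ∀ᶠ y in 𝓝 c, g y = ∑ t, (y t - c t) * h t y := by
  classical
  obtain ⟨p, r, hp⟩ : ∃ p r, HasFPowerSeriesOnBall g p c r := by
    obtain ⟨p, hp⟩ := hg; obtain ⟨r, hr⟩ := hp; exact ⟨p, r, hr⟩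
  obtain ⟨r', hr'0, hr'⟩ : ∃ r' : ℝ≥0, (0 : ℝ≥0∞) < r' ∧ (r' : ℝ≥0∞) < r :=
    ENNReal.lt_iff_exists_nnreal_btwn.mp hp.r_pos
  have hr'pos : 0 < r' := by exact_mod_cast hr'0
  have hr'ne : ((r' : ℝ)) ≠ 0 := by positivity
  obtain ⟨C, hC, hbound⟩ := p.norm_mul_pow_le_of_lt_radius (lt_of_lt_of_le hr' hp.r_le)
  set q : ι → FormalMultilinearSeries K (ι → K) K := fun t n =>
    (ContinuousLinearMap.apply K K (Pi.single t 1)).compContinuousMultilinearMap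
      ((p (n + 1)).curryRight) with hq
  have hqnorm : ∀ t n, ‖q t n‖ ≤ ‖(Pi.single t 1 : ι → K)‖ * ‖p (n + 1)‖ := by
    intro t n
    refine (ContinuousLinearMap.norm_compContinuousMultilinearMap_le _ _).trans ?_
    gcongr
    · refine ContinuousLinearMap.opNorm_le_bound _ (norm_nonneg _) fun L => ?_
      rw [mul_comm]; exact L.le_opNorm _
    · rw [(p (n+1)).curryRight_norm]
  have hqrad : ∀ t, (r' : ℝ≥0∞) ≤ (q t).radius := by
    intro t
    refine FormalMultilinearSeries.le_radius_of_bound _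
      (‖(Pi.single t 1 : ι → K)‖ * C / r') fun n => ?_
    have h2 : ‖q t n‖ * (r' : ℝ) ^ n ≤
        ‖(Pi.single t 1 : ι → K)‖ * (‖p (n+1)‖ * (r':ℝ) ^ (n+1)) / r' := by
      rw [le_div_iff₀ (by positivity : (0:ℝ) < (r':ℝ))]
      calc ‖q t n‖ * (r' : ℝ) ^ n * r'
          = ‖q t n‖ * ((r':ℝ)^n * r') := by ring
        _ ≤ (‖(Pi.single t 1 : ι → K)‖ * ‖p (n + 1)‖) * ((r':ℝ)^n * r') :=
            mul_le_mul_of_nonneg_right (hqnorm t n) (by positivity)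
        _ = _ := by ring
    refine h2.trans ?_
    gcongr
    exact hbound (n+1)
  have hqpos : ∀ t, (0 : ℝ≥0∞) < (q t).radius := fun t => lt_of_lt_of_le hr'0 (hqrad t)
  refine ⟨fun t y => (q t).sum (y - c), fun t => ?_, ?_⟩
  · have h2 : AnalyticAt K (fun y : ι → K => y - c) c := analyticAt_id.sub analyticAt_const
    have h1 : AnalyticAt K (q t).sum (0 : ι → K) :=
      ((q t).hasFPowerSeriesOnBall (hqpos t)).analyticAt
    exact h1.comp_of_eq h2 (sub_self c)
  · have hball : Metric.eball c r' ∈ 𝓝 c := EMetric.ball_mem_nhds c hr'0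
    filter_upwards [hball] with y hy
    set v : ι → K := y - c with hv
    have hvmem : v ∈ Metric.eball (0 : ι → K) r' := by
      rw [EMetric.mem_ball] at hy ⊢
      rwa [edist_zero_right, hv, ← edist_eq_enorm_sub]
    have hcv : c + v = y := by rw [hv]; abel
    have hA : HasSum (fun n => p n fun _ => v) (g y) := by
      have := hp.hasSum (EMetric.ball_subset_ball hr'.le hvmem)
      rwa [hcv] at this
    have hf0 : p 0 (fun _ => v) = 0 := by rw [hp.coeff_zero]; exact h0
    have hshift : HasSum (fun n => p (n + 1) fun _ => v) (g y) := by
      refine (hasSum_nat_add_iff (f := fun n => p n fun _ => v) 1).mpr ?_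
      simpa [hf0] using hA
    have hB : ∀ t, HasSum (fun n => q t n fun _ => v) ((q t).sum v) := fun t =>
      (q t).hasSum (EMetric.ball_subset_ball (hqrad t) hvmem)
    have htot : HasSum (fun n => ∑ t, v t * (q t n fun _ => v))
        (∑ t, v t * (q t).sum v) := hasSum_sum fun t _ => (hB t).mul_left (v t)
    have hterm : ∀ n, ∑ t, v t * (q t n fun _ => v) = p (n + 1) fun _ => v := by
      intro n
      have hsnoc : (Fin.snoc (fun _ : Fin n => v) v : Fin (n+1) → (ι → K)) = fun _ => v := by
        funext i
        refine Fin.lastCases ?_ (fun j => ?_) i <;> simp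
      calc ∑ t, v t * (q t n fun _ => v)
          = ∑ t, ((p (n+1)).curryRight (fun _ => v)) (v t • (Pi.single t 1 : ι → K)) := by
            refine Finset.sum_congr rfl fun t _ => ?_
            rw [map_smul, smul_eq_mul]
            rfl
        _ = ((p (n+1)).curryRight (fun _ => v)) (∑ t, v t • (Pi.single t 1 : ι → K)) := by
            rw [map_sum]
        _ = ((p (n+1)).curryRight (fun _ => v)) v := by
            congr 1
            funext j
            simp [Pi.single_apply, Finset.sum_apply, mul_ite]
        _ = p (n + 1) fun _ => v := by
            rw [ContinuousMultilinearMap.curryRight_apply, hsnoc]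
    rw [funext hterm] at htot
    have := hshift.unique htot
    simpa [hv] using this

end KeyFactor

lemma ofFun_sum {α β : Type*} {l : Filter α} [AddCommMonoid β] {ι : Type*}
    (s : Finset ι) (f : ι → α → β) :
    (∑ i ∈ s, (Germ.ofFun (f i) : Germ l β)) = Germ.ofFun (fun x => ∑ i ∈ s, f i x) := by
  classical
  induction s using Finset.cons_induction with
  | empty => rfl
  | cons i s hi ih =>
    rw [Finset.sum_cons, ih, ← Germ.coe_add]
    congr 1
    funext x
    rw [Finset.sum_cons]; rfl

variable {T : Type} {K : Type} [RCLike K]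

/-- Evaluation of a germ at the base point. -/
def evalHom (x₀ : T → K) : Germ (𝓝 x₀) K →+* K where
  toFun φ := φ.liftOn (fun f => f x₀) fun _ _ h => h.eq_of_nhds
  map_one' := rfl
  map_mul' φ ψ := Germ.inductionOn₂ φ ψ fun _ _ => rfl
  map_zero' := rfl
  map_add' φ ψ := Germ.inductionOn₂ φ ψ fun _ _ => rfl

/-- Evaluation of elements of `Ox x₀` at `x₀`. -/
def ev (x₀ : T → K) : Ox x₀ →+* K := (evalHom x₀).comp (Ox x₀).subtype

lemma ev_eq (x₀ : T → K) (φ : Ox x₀) {S : Finset T} {g : ({t // t ∈ S} → K) → K}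
    (hrep : (φ : Germ (𝓝 x₀) K) = Germ.ofFun (fun x => g (proj K S x))) :
    ev x₀ φ = g (proj K S x₀) := by
  show evalHom x₀ (φ : Germ (𝓝 x₀) K) = _
  rw [hrep]; rfl

lemma isUnit_of_ev_ne (x₀ : T → K) (φ : Ox x₀) (h : ev x₀ φ ≠ 0) : IsUnit φ := by
  obtain ⟨S, g, hg, hrep⟩ := φ.2
  rw [ev_eq x₀ φ hrep] at h
  have hginv : AnalyticAt K (fun y => (g y)⁻¹) (proj K S x₀) := hg.inv h
  have hψ : IsFP x₀ (Germ.ofFun fun x => (g (proj K S x))⁻¹) :=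
    ⟨S, fun y => (g y)⁻¹, hginv, rfl⟩
  have hne : ∀ᶠ x in 𝓝 x₀, g (proj K S x) ≠ 0 := by
    have hc : Tendsto (fun x => g (proj K S x)) (𝓝 x₀) (𝓝 (g (proj K S x₀))) :=
      hg.continuousAt.tendsto.comp (proj_tendsto S x₀)
    exact hc.eventually_ne h
  refine IsUnit.of_mul_eq_one (a := φ) ⟨_, hψ⟩ ?_
  apply Subtype.ext
  show (φ : Germ (𝓝 x₀) K) * Germ.ofFun (fun x => (g (proj K S x))⁻¹) = 1
  rw [hrep, ← Germ.coe_mul, ← Germ.coe_one, Germ.coe_eq]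
  filter_upwards [hne] with x hx
  show g (proj K S x) * (g (proj K S x))⁻¹ = 1
  exact mul_inv_cancel₀ hx

lemma coord_isFP (x₀ : T → K) (t : T) : IsFP x₀ (Germ.ofFun fun x => x t - x₀ t) :=
  ⟨{t}, fun y => y ⟨t, Finset.mem_singleton_self t⟩ - x₀ t,
    ((ContinuousLinearMap.proj (R := K)
        (φ := fun _ : {s // s ∈ ({t} : Finset T)} => K)
        ⟨t, Finset.mem_singleton_self t⟩).analyticAt _).sub analyticAt_const, rfl⟩

lemma mem_of_ev_zero (x₀ : T → K) (φ : Ox x₀) (h : ev x₀ φ = 0) : φ ∈ mIdeal x₀ := by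
  classical
  obtain ⟨S, g, hg, hrep⟩ := φ.2
  rw [ev_eq x₀ φ hrep] at h
  obtain ⟨w, hA, hev⟩ := key_factor hg h
  set gen : {s // s ∈ S} → Ox x₀ := fun t =>
    ⟨Germ.ofFun fun x => x t.1 - x₀ t.1, coord_isFP x₀ t.1⟩ with hgen
  set hh : {s // s ∈ S} → Ox x₀ := fun t =>
    ⟨Germ.ofFun fun x => w t (proj K S x), ⟨S, w t, hA t, rfl⟩⟩ with hhh
  have hφ : φ = ∑ t : {s // s ∈ S}, gen t * hh t := by
    apply Subtype.ext
    rw [hrep]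
    have h1 : ((∑ t : {s // s ∈ S}, gen t * hh t : Ox x₀) : Germ (𝓝 x₀) K)
        = ∑ t : {s // s ∈ S},
            Germ.ofFun (fun x => (x t.1 - x₀ t.1) * w t (proj K S x)) := by
      rw [AddSubmonoidClass.coe_finset_sum]
      exact Finset.sum_congr rfl fun t _ => rfl
    have h2 : (∑ t : {s // s ∈ S},
          Germ.ofFun (fun x => (x t.1 - x₀ t.1) * w t (proj K S x)) : Germ (𝓝 x₀) K)
        = Germ.ofFun (fun x => ∑ t : {s // s ∈ S}, (x t.1 - x₀ t.1) * w t (proj K S x)) := by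
      exact ofFun_sum Finset.univ fun t x => (x t.1 - x₀ t.1) * w t (proj K S x)
    rw [h1, h2, Germ.coe_eq]
    filter_upwards [(proj_tendsto S x₀).eventually hev] with x hx
    exact hx
  rw [hφ]
  exact Ideal.sum_mem _ fun t _ =>
    Ideal.mul_mem_right _ _ (Ideal.subset_span ⟨t.1, rfl⟩)

lemma ev_zero_of_mem (x₀ : T → K) (φ : Ox x₀) (h : φ ∈ mIdeal x₀) : ev x₀ φ = 0 := by
  have hle : mIdeal x₀ ≤ RingHom.ker (ev x₀) := by
    rw [mIdeal, Ideal.span_le]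
    rintro ψ ⟨t, ht⟩
    rw [SetLike.mem_coe, RingHom.mem_ker]
    show evalHom x₀ (ψ : Germ (𝓝 x₀) K) = 0
    rw [ht]
    exact sub_self (x₀ t)
  exact RingHom.mem_ker.mp (hle h)

lemma ev_ne_zero_of_isUnit (x₀ : T → K) {φ : Ox x₀} (hu : IsUnit φ) : ev x₀ φ ≠ 0 := by
  obtain ⟨u, rfl⟩ := hu
  intro h0
  have h1 := congrArg (ev x₀) u.mul_inv
  rw [map_mul, map_one, h0, zero_mul] at h1
  exact zero_ne_one h1

/-- `O_{x₀}(K^T)` is a local ring with unique maximal ideal `m_{x₀} = (x_t - x₀ t : t ∈ T)`;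
a germ is non-invertible iff it lies in `m_{x₀}`. -/
theorem stmt_8 [Infinite T] (x₀ : T → K) :
    (∀ φ : Ox x₀, ¬ IsUnit φ ↔ φ ∈ mIdeal x₀) ∧
    (mIdeal x₀).IsMaximal ∧
    ∀ J : Ideal (Ox x₀), J.IsMaximal → J = mIdeal x₀ := by
  have part1 : ∀ φ : Ox x₀, ¬ IsUnit φ ↔ φ ∈ mIdeal x₀ := by
    intro φ
    constructor
    · intro hnu
      apply mem_of_ev_zero
      by_contra hne
      exact hnu (isUnit_of_ev_ne x₀ φ hne)
    · intro hm hu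
      exact ev_ne_zero_of_isUnit x₀ hu (ev_zero_of_mem x₀ φ hm)
  have hker : mIdeal x₀ = RingHom.ker (ev x₀) := by
    ext φ
    rw [RingHom.mem_ker]
    exact ⟨ev_zero_of_mem x₀ φ, mem_of_ev_zero x₀ φ⟩
  have hsurj : Function.Surjective (ev x₀) := fun k =>
    ⟨⟨Germ.ofFun fun _ => k, ⟨∅, fun _ => k, analyticAt_const, rfl⟩⟩, rfl⟩
  have hmax : (mIdeal x₀).IsMaximal := by
    rw [hker]
    exact RingHom.ker_isMaximal_of_surjective _ hsurj
  refine ⟨part1, hmax, fun J hJ => ?_⟩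
  refine hJ.eq_of_le hmax.ne_top fun φ hφ => ?_
  by_contra hφm
  have hu : IsUnit φ := by
    by_contra hnu
    exact hφm ((part1 φ).mp hnu)
  exact hJ.ne_top (J.eq_top_of_isUnit_mem hφ hu)
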